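/- Let 0 < d2 < d1 < 1, set z1 = d1, z2 = d2, z3 = 1 - d2, z4 = 1 + d1, and suppose τ : ℤ³ → ℂ satisfies the generalized discrete BKP equation z1 τ(p+1,q,r) τ(p,q+1,r+1) + z2 τ(p,q+1,r) τ(p+1,q,r+1) + z3 τ(p,q,r+1) τ(p+1,q+1,r) - z4 τ(p,q,r) τ(p+1,q+1,r+1) = 0 for all p, q, r ∈ ℤ. Define τ̂(l, m, n) = τ(n - m - 2l, -l, m + l), and assume τ̂(l+1, m, n) = τ̂(l, m, n) for all l, m, n. Then f(m, n) := τ̂(0, m, n) satisfies (1 + d1) f(m-1, n) f(m+1, n+1) = d1 f(m+1, n) f(m-1, n+1) + d2 f(m, n-1) f(m, n+2) + (1 - d2) f(m, n) f(m, n+1) for all m, n ∈ ℤ. -/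

import Mathlib

theorem stmt_18 (d1 d2 : ℝ) (h1 : 0 < d2) (h2 : d2 < d1) (h3 : d1 < 1)
    (z1 z2 z3 z4 : ℝ)
    (hz1 : z1 = d1) (hz2 : z2 = d2) (hz3 : z3 = 1 - d2) (hz4 : z4 = 1 + d1)
    (τ : ℤ → ℤ → ℤ → ℂ)
    (hBKP : ∀ p q r : ℤ,
      (z1 : ℂ) * τ (p + 1) q r * τ p (q + 1) (r + 1) +
      (z2 : ℂ) * τ p (q + 1) r * τ (p + 1) q (r + 1) +
      (z3 : ℂ) * τ p q (r + 1) * τ (p + 1) (q + 1) r -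
      (z4 : ℂ) * τ p q r * τ (p + 1) (q + 1) (r + 1) = 0)
    (τhat : ℤ → ℤ → ℤ → ℂ)
    (hτhat : ∀ l m n : ℤ, τhat l m n = τ (n - m - 2 * l) (-l) (m + l))
    (hred : ∀ l m n : ℤ, τhat (l + 1) m n = τhat l m n)
    (f : ℤ → ℤ → ℂ)
    (hf : ∀ m n : ℤ, f m n = τhat 0 m n) :
    ∀ m n : ℤ,
      (1 + (d1 : ℂ)) * f (m - 1) n * f (m + 1) (n + 1) =
        (d1 : ℂ) * f (m + 1) n * f (m - 1) (n + 1) +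
        (d2 : ℂ) * f m (n - 1) * f m (n + 2) +
        (1 - (d2 : ℂ)) * f m n * f m (n + 1) := by
  have key : ∀ l m n : ℤ, τhat l m n = τhat 0 m n := by
    intro l m n
    induction l using Int.induction_on with
    | zero => rfl
    | succ k ih => rw [hred, ih]
    | pred k ih =>
      have h := hred (-(k : ℤ) - 1) m n
      rw [show -(k : ℤ) - 1 + 1 = -k by ring] at h
      rw [← h, ih]
  have hfτ : ∀ P Q R : ℤ, τ P Q R = f (R + Q) (P + R - Q) := by
    intro P Q R
    rw [hf, ← key (-Q), hτhat]
    congr 1 <;> [skip; ring; ring]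
    ring
  intro m n
  have h := hBKP (n - m + 1) 0 (m - 1)
  simp only [hfτ] at h
  norm_num at h
  rw [hz1, hz2, hz3, hz4] at h
  simp only [show (n - m + 1 + m : ℤ) = n + 1 by ring,
    show (n - m + 1 + m - 1 : ℤ) = n by ring,
    show (n - m + 1 + 1 + m : ℤ) = n + 2 by ring,
    show (n - m + 1 + 1 + m - 1 : ℤ) = n + 1 by ring,
    show (n + 1 - 1 : ℤ) = n by ring,
    show (n + 2 - 1 : ℤ) = n + 1 by ring] at h
  push_cast at h
  linear_combination -h
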